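/- Let Φ be coherence-invariant with coherence μ and θ = μ̄², and suppose k < N/2 − 1. Let β > 0 and a ∈ (0,1) be constants and suppose μ⁴ ≤ (1−a)²β² / (32·k·(log(2N/ε))³) and θ ≤ aβ/(k·log(2N/ε)). Then Φ is (k, α, ε)-SINC with α = β/log(2N/ε). The same conclusion holds without the coherence-invariance assumption if θ = μ̄²_max. -/

import Mathlib

open Finset Matrix

open scoped Classical

noncomputable section

/-- The ℓ₂→ℓ₂ operator (spectral) norm of a real matrix. -/
def specNorm {α β : Type*} [Fintype α] [Fintype β] (A : Matrix α β ℝ) : ℝ :=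
  sSup {t : ℝ | ∃ x : β → ℝ, (∑ j, x j ^ 2) ≤ 1 ∧ t = Real.sqrt (∑ i, (∑ j, A i j * x j) ^ 2)}

variable {m N : ℕ}

/-- The submatrix of `Φ` formed by the columns indexed by `I`. -/
def colSub (Φ : Matrix (Fin m) (Fin N) ℝ) (I : Finset (Fin N)) :
    Matrix (Fin m) {i // i ∈ I} ℝ :=
  Matrix.of fun r j => Φ r (j : Fin N)

/-- The Gram matrix `Φ_Iᵀ Φ_I`. -/
def gram (Φ : Matrix (Fin m) (Fin N) ℝ) (I : Finset (Fin N)) :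
    Matrix {i // i ∈ I} {i // i ∈ I} ℝ :=
  (colSub Φ I)ᵀ * colSub Φ I

/-- `‖Φ_Iᵀ φ_i‖₂²`. -/
def sincSq (Φ : Matrix (Fin m) (Fin N) ℝ) (I : Finset (Fin N)) (i : Fin N) : ℝ :=
  ∑ j ∈ I, (∑ r, Φ r j * Φ r i) ^ 2

/-- All columns of `Φ` have unit ℓ₂ norm. -/
def unitCols (Φ : Matrix (Fin m) (Fin N) ℝ) : Prop :=
  ∀ j, (∑ r, Φ r j ^ 2) = 1

/-- `Φ` is `(k,δ,ε)`-StRIP: a uniformly random `k`-subset `I` satisfies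
`‖Φ_Iᵀ Φ_I − Id‖ ≤ δ` with probability at least `1 − ε`. -/
def StRIP (Φ : Matrix (Fin m) (Fin N) ℝ) (k : ℕ) (δ ε : ℝ) : Prop :=
  (1 - ε) * ((Finset.powersetCard k (univ : Finset (Fin N))).card : ℝ) ≤
    (((Finset.powersetCard k (univ : Finset (Fin N))).filter
        fun I => specNorm (gram Φ I - 1) ≤ δ).card : ℝ)

/-- `Φ` is `(k,α,ε)`-SINC: a uniformly random `k`-subset `I` satisfies
`max_{i ∉ I} ‖Φ_Iᵀ φ_i‖₂² ≤ α` with probability at least `1 − ε`. -/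
def SINC (Φ : Matrix (Fin m) (Fin N) ℝ) (k : ℕ) (α ε : ℝ) : Prop :=
  (1 - ε) * ((Finset.powersetCard k (univ : Finset (Fin N))).card : ℝ) ≤
    (((Finset.powersetCard k (univ : Finset (Fin N))).filter
        fun I => ∀ i ∉ I, sincSq Φ I i ≤ α).card : ℝ)

/-- ℓ₁ norm on `ℝ^N`. -/
def l1 (x : Fin N → ℝ) : ℝ := ∑ i, |x i|

/-- ℓ₂ norm on `ℝ^N`. -/
def l2 (x : Fin N → ℝ) : ℝ := Real.sqrt (∑ i, x i ^ 2)

/-- Restriction `x_I` of a vector to the coordinates in `I` (zero outside `I`). -/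
def restr (I : Finset (Fin N)) (x : Fin N → ℝ) : Fin N → ℝ :=
  fun i => if i ∈ I then x i else 0

/-- `x` is `k`-sparse. -/
def kSparse (k : ℕ) (x : Fin N → ℝ) : Prop :=
  ((univ : Finset (Fin N)).filter fun i => x i ≠ 0).card ≤ k

/-- `min_{x' k-sparse} ‖x − x′‖₁`. -/
def bestK (k : ℕ) (x : Fin N → ℝ) : ℝ :=
  sInf {t : ℝ | ∃ x' : Fin N → ℝ, kSparse k x' ∧ t = l1 (x - x')}

/-- `xh` is a (noiseless) Basis Pursuit solution for the data `y`. -/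
def isBPsol (Φ : Matrix (Fin m) (Fin N) ℝ) (y : Fin m → ℝ) (xh : Fin N → ℝ) : Prop :=
  Φ.mulVec xh = y ∧ ∀ u : Fin N → ℝ, Φ.mulVec u = y → l1 xh ≤ l1 u

/-- Inner product of columns `i` and `j` of `Φ`. -/
def ip (Φ : Matrix (Fin m) (Fin N) ℝ) (i j : Fin N) : ℝ := ∑ r, Φ r i * Φ r j

/-- Mean square coherence `μ̄² = (1/(N(N−1))) Σ_{i≠j} μ_ij²`. -/
def mu2bar (Φ : Matrix (Fin m) (Fin N) ℝ) : ℝ :=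
  (∑ i, ∑ j ∈ (univ : Finset (Fin N)).erase i, (ip Φ i j) ^ 2) / ((N : ℝ) * ((N : ℝ) - 1))

/-- Maximum average square coherence `μ̄²_max = max_j (1/(N−1)) Σ_{i≠j} μ_ij²`. -/
def mu2max (Φ : Matrix (Fin m) (Fin N) ℝ) : ℝ :=
  sSup {t : ℝ | ∃ j : Fin N,
    t = (∑ i ∈ (univ : Finset (Fin N)).erase j, (ip Φ i j) ^ 2) / ((N : ℝ) - 1)}

/-- `Φ` is coherence-invariant: the multiset `{μ_ij : j ≠ i}` does not depend on `i`. -/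
def CoherenceInvariant (Φ : Matrix (Fin m) (Fin N) ℝ) : Prop :=
  ∀ i i' : Fin N,
    Multiset.map (fun j => |ip Φ i j|) ((univ : Finset (Fin N)).erase i).val =
    Multiset.map (fun j => |ip Φ i' j|) ((univ : Finset (Fin N)).erase i').val

set_option maxHeartbeats 1000000

section Aux
variable {ι : Type*} [DecidableEq ι]

lemma sincAux_choose_desc_le (n k t : ℕ) (ht : t ≤ k) (hk : k ≤ n) :
    (n - t).choose (k - t) * n ^ t ≤ n.choose k * k ^ t := by
  induction t with
  | zero => simp
  | succ t ih =>
    have ht' : t ≤ k := Nat.le_of_succ_le ht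
    have ih := ih ht'
    have h1 : t + 1 ≤ n := le_trans ht hk
    have hnt : 1 ≤ n - t := by omega
    have hkt : 1 ≤ k - t := by omega
    have key : (n - t) * (n - (t+1)).choose (k - (t+1)) = (n - t).choose (k - t) * (k - t) := by
      have := Nat.add_one_mul_choose_eq (n - t - 1) (k - t - 1)
      have e1 : n - t - 1 + 1 = n - t := by omega
      have e2 : n - t - 1 + 1 = n - t := by omega
      have e3 : k - t - 1 + 1 = k - t := by omega
      rw [e1, e3] at this
      simpa [e2, Nat.succ_eq_add_one, Nat.sub_sub] using this
    have hpos : 0 < n - t := hnt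
    refine Nat.le_of_mul_le_mul_left ?_ hpos
    calc (n - t) * ((n - (t+1)).choose (k - (t+1)) * n ^ (t+1))
        = ((n - t) * (n - (t+1)).choose (k - (t+1))) * n ^ (t+1) := by ring
      _ = (n - t).choose (k - t) * (k - t) * n ^ (t+1) := by rw [key]
      _ = ((n - t).choose (k - t) * n ^ t) * ((k - t) * n) := by ring
      _ ≤ (n.choose k * k ^ t) * ((n - t) * k) := by
          apply Nat.mul_le_mul ih
          rw [Nat.sub_mul, Nat.sub_mul]
          have h1 : t * k ≤ t * n := Nat.mul_le_mul_left t hk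
          have h2 : k * n = n * k := Nat.mul_comm _ _
          omega
      _ = (n - t) * (n.choose k * k ^ (t+1)) := by ring

lemma sincAux_count_superset_le (F : Finset ι) (k : ℕ) (T : Finset ι) (hT : T ⊆ F) :
    ((((powersetCard k F).filter (fun I => T ⊆ I)).card : ℝ)) ≤
      (F.card.choose k : ℝ) * ((k : ℝ) / (F.card : ℝ)) ^ T.card := by
  set n := F.card with hn
  set t := T.card with htc
  by_cases hkn : k ≤ n
  · by_cases htk : t ≤ k
    · have step1 : ((powersetCard k F).filter (fun I => T ⊆ I)).card
          ≤ (powersetCard (k - t) (F \ T)).card := by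
        apply Finset.card_le_card_of_injOn (fun I => I \ T)
        · intro I hI
          simp only [coe_filter, Set.mem_setOf_eq, mem_powersetCard] at hI
          obtain ⟨⟨hIF, hIc⟩, hTI⟩ := hI
          rw [mem_coe, mem_powersetCard]
          exact ⟨sdiff_subset_sdiff hIF (le_refl T),
            by rw [card_sdiff_of_subset hTI, hIc]⟩
        · intro I1 h1 I2 h2 he
          simp only [coe_filter, Set.mem_setOf_eq, mem_powersetCard] at h1 h2
          have e1 : I1 \ T ∪ T = I1 := sdiff_union_of_subset h1.2
          have e2 : I2 \ T ∪ T = I2 := sdiff_union_of_subset h2.2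
          simp only at he
          rw [← e1, ← e2, he]
      rw [card_powersetCard, card_sdiff_of_subset hT] at step1
      have step2 : ((n - t).choose (k - t) : ℝ) ≤ (n.choose k : ℝ) * ((k : ℝ) / n) ^ t := by
        rcases Nat.eq_zero_or_pos n with h0 | hpos
        · have hk0 : k = 0 := by omega
          have ht0 : t = 0 := by omega
          simp [h0, hk0, ht0]
        · have hnat := sincAux_choose_desc_le n k t htk hkn
          have hnR : (0 : ℝ) < (n : ℝ) ^ t := by positivity
          rw [div_pow, ← mul_div_assoc, le_div_iff₀ hnR]
          calc ((n - t).choose (k - t) : ℝ) * (n : ℝ) ^ t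
              = (((n - t).choose (k - t) * n ^ t : ℕ) : ℝ) := by push_cast; ring
            _ ≤ ((n.choose k * k ^ t : ℕ) : ℝ) := by exact_mod_cast hnat
            _ = (n.choose k : ℝ) * (k : ℝ) ^ t := by push_cast; ring
      calc (((powersetCard k F).filter (fun I => T ⊆ I)).card : ℝ)
          ≤ ((n - t).choose (k - t) : ℝ) := by exact_mod_cast step1
        _ ≤ _ := step2
    · have : (powersetCard k F).filter (fun I => T ⊆ I) = ∅ := by
        rw [filter_eq_empty_iff]
        intro I hI hTI
        rw [mem_powersetCard] at hI
        exact htk (le_trans (card_le_card hTI) (le_of_eq hI.2))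
      rw [this]
      simp only [card_empty, Nat.cast_zero]
      positivity
  · have : powersetCard k F = ∅ := by
      rw [powersetCard_eq_empty]; omega
    rw [this]
    simp only [filter_empty, card_empty, Nat.cast_zero]
    positivity

lemma sincAux_prod_one_add_eq (s : Finset ι) (z : ι → ℝ) :
    ∏ j ∈ s, (1 + z j) = ∑ T ∈ s.powerset, ∏ j ∈ T, z j := by
  have := Finset.prod_add z (fun _ => (1 : ℝ)) s
  simp only [prod_const_one, mul_one] at this
  rw [← this]
  exact Finset.prod_congr rfl (fun j _ => add_comm 1 (z j))

lemma sincAux_master (F : Finset ι) (k : ℕ) (z : ι → ℝ) (hz : ∀ j ∈ F, 0 ≤ z j) :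
    ∑ I ∈ powersetCard k F, ∏ j ∈ I, (1 + z j) ≤
      (F.card.choose k : ℝ) * Real.exp (((k : ℝ) / F.card) * ∑ j ∈ F, z j) := by
  set n := F.card
  set w : ℝ := (k : ℝ) / n with hw
  have hw0 : 0 ≤ w := by positivity
  have key : ∑ I ∈ powersetCard k F, ∏ j ∈ I, (1 + z j)
      = ∑ T ∈ F.powerset, (∏ j ∈ T, z j) *
          (((powersetCard k F).filter (fun I => T ⊆ I)).card : ℝ) := by
    have h1 : ∀ I ∈ powersetCard k F, ∏ j ∈ I, (1 + z j)
        = ∑ T ∈ F.powerset, (if T ⊆ I then ∏ j ∈ T, z j else 0) := by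
      intro I hI
      rw [mem_powersetCard] at hI
      rw [sincAux_prod_one_add_eq, ← Finset.sum_filter]
      congr 1
      ext T
      simp only [mem_filter, mem_powerset]
      constructor
      · intro h; exact ⟨h.trans hI.1, h⟩
      · intro h; exact h.2
    rw [Finset.sum_congr rfl h1, Finset.sum_comm]
    apply Finset.sum_congr rfl
    intro T _
    rw [← Finset.sum_filter, Finset.sum_const, nsmul_eq_mul, mul_comm]
  rw [key]
  have step3 : ∑ T ∈ F.powerset, (∏ j ∈ T, z j) *
        (((powersetCard k F).filter (fun I => T ⊆ I)).card : ℝ)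
      ≤ ∑ T ∈ F.powerset, (∏ j ∈ T, z j) * ((n.choose k : ℝ) * w ^ T.card) := by
    apply Finset.sum_le_sum
    intro T hT
    rw [mem_powerset] at hT
    have hzT : 0 ≤ ∏ j ∈ T, z j := Finset.prod_nonneg (fun j hj => hz j (hT hj))
    exact mul_le_mul_of_nonneg_left (sincAux_count_superset_le F k T hT) hzT
  have step4 : ∑ T ∈ F.powerset, (∏ j ∈ T, z j) * ((n.choose k : ℝ) * w ^ T.card)
      = (n.choose k : ℝ) * ∏ j ∈ F, (1 + w * z j) := by
    rw [sincAux_prod_one_add_eq, Finset.mul_sum, Finset.sum_congr rfl]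
    intro T hT
    rw [Finset.prod_mul_distrib, Finset.prod_const]
    ring
  have step5 : ∏ j ∈ F, (1 + w * z j) ≤ Real.exp (w * ∑ j ∈ F, z j) := by
    rw [Finset.mul_sum, Real.exp_sum]
    apply Finset.prod_le_prod
    · intro j hj
      have h := hz j hj
      have := mul_nonneg hw0 h
      linarith
    · intro j hj
      have := Real.add_one_le_exp (w * z j)
      linarith
  calc _ ≤ _ := step3
    _ = _ := step4
    _ ≤ (n.choose k : ℝ) * Real.exp (w * ∑ j ∈ F, z j) := by
        apply mul_le_mul_of_nonneg_left step5 (by positivity)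

lemma sincAux_exp_convex_bound (c M s : ℝ) (hc0 : 0 ≤ c) (hcM : c ≤ M) (hM : 0 < M) :
    Real.exp (s * c) ≤ 1 + (c / M) * (Real.exp (s * M) - 1) := by
  set t : ℝ := c / M with ht
  have ht0 : 0 ≤ t := by positivity
  have ht1 : t ≤ 1 := by rw [ht, div_le_one hM]; exact hcM
  have hconv := convexOn_exp.2 (Set.mem_univ (0 : ℝ)) (Set.mem_univ (s * M))
    (by linarith : (0:ℝ) ≤ 1 - t) ht0 (by ring)
  simp only [smul_eq_mul, mul_zero, Real.exp_zero, mul_one] at hconv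
  have harg : 0 + t * (s * M) = s * c := by
    rw [ht]
    field_simp
    ring
  rw [harg] at hconv
  linarith

lemma sincAux_chernoff_count (F : Finset ι) (k : ℕ) (c : ι → ℝ) (hc : ∀ j ∈ F, 0 ≤ c j)
    (α s : ℝ) (hs : 0 ≤ s) :
    (((powersetCard k F).filter (fun I => α < ∑ j ∈ I, c j)).card : ℝ) ≤
      Real.exp (-(s*α)) * ((F.card.choose k : ℝ) *
        Real.exp (((k : ℝ) / F.card) * ∑ j ∈ F, (Real.exp (s * c j) - 1))) := by
  have hterm : ∀ I ∈ (powersetCard k F).filter (fun I => α < ∑ j ∈ I, c j),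
      (1 : ℝ) ≤ Real.exp (-(s*α)) * ∏ j ∈ I, (1 + (Real.exp (s * c j) - 1)) := by
    intro I hI
    rw [mem_filter] at hI
    have : ∏ j ∈ I, (1 + (Real.exp (s * c j) - 1)) = Real.exp (s * ∑ j ∈ I, c j) := by
      rw [Finset.mul_sum, Real.exp_sum]
      exact Finset.prod_congr rfl (fun j _ => by ring)
    rw [this, ← Real.exp_add]
    rw [show (1:ℝ) = Real.exp 0 from (Real.exp_zero).symm]
    apply Real.exp_le_exp.2
    have := hI.2
    nlinarith
  have hnn : ∀ I ∈ powersetCard k F,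
      (0:ℝ) ≤ Real.exp (-(s*α)) * ∏ j ∈ I, (1 + (Real.exp (s * c j) - 1)) := by
    intro I hI
    rw [mem_powersetCard] at hI
    apply mul_nonneg (Real.exp_nonneg _)
    apply Finset.prod_nonneg
    intro j hj
    have : (0:ℝ) ≤ s * c j := mul_nonneg hs (hc j (hI.1 hj))
    have := Real.one_le_exp this
    linarith
  calc (((powersetCard k F).filter (fun I => α < ∑ j ∈ I, c j)).card : ℝ)
      = ∑ _I ∈ (powersetCard k F).filter (fun I => α < ∑ j ∈ I, c j), (1:ℝ) := by
        rw [Finset.sum_const, nsmul_eq_mul, mul_one]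
    _ ≤ ∑ I ∈ (powersetCard k F).filter (fun I => α < ∑ j ∈ I, c j),
          Real.exp (-(s*α)) * ∏ j ∈ I, (1 + (Real.exp (s * c j) - 1)) :=
        Finset.sum_le_sum hterm
    _ ≤ ∑ I ∈ powersetCard k F,
          Real.exp (-(s*α)) * ∏ j ∈ I, (1 + (Real.exp (s * c j) - 1)) :=
        Finset.sum_le_sum_of_subset_of_nonneg (filter_subset _ _)
          (fun I hI _ => hnn I hI)
    _ = Real.exp (-(s*α)) * ∑ I ∈ powersetCard k F, ∏ j ∈ I, (1 + (Real.exp (s * c j) - 1)) := by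
        rw [Finset.mul_sum]
    _ ≤ _ := by
        apply mul_le_mul_of_nonneg_left _ (Real.exp_nonneg _)
        apply sincAux_master
        intro j hj
        have : (0:ℝ) ≤ s * c j := mul_nonneg hs (hc j hj)
        have := Real.one_le_exp this
        linarith

end Aux

/-- Theorem: coherence conditions implying the SINC property. -/
theorem stmt8 (m N k : ℕ) (hk : (k : ℝ) < N / 2 - 1)
    (ε β a μ θ : ℝ) (hε0 : 0 < ε) (hε1 : ε < 1) (hβ : 0 < β) (ha0 : 0 < a) (ha1 : a < 1)
    (Φ : Matrix (Fin m) (Fin N) ℝ) (hcols : unitCols Φ)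
    -- `μ` is the coherence of `Φ`
    (hμ : ∀ i j : Fin N, i ≠ j → |ip Φ i j| ≤ μ)
    -- `θ = μ̄²` when `Φ` is coherence-invariant, and `θ = μ̄²_max` in general
    (hθ : (CoherenceInvariant Φ ∧ θ = mu2bar Φ) ∨ θ = mu2max Φ)
    (h1 : μ ^ 4 ≤ (1 - a) ^ 2 * β ^ 2 / (32 * k * (Real.log (2 * N / ε)) ^ 3))
    (h2 : θ ≤ a * β / (k * Real.log (2 * N / ε))) :
    SINC Φ k (β / Real.log (2 * N / ε)) ε := by
  unfold SINC
  -- basic facts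
  have hN3 : 3 ≤ N := by
    by_contra h
    push_neg at h
    have hk0 : (0:ℝ) ≤ (k:ℝ) := Nat.cast_nonneg k
    have : (N:ℝ) ≤ 2 := by exact_mod_cast Nat.lt_succ_iff.mp h
    linarith [hk]
  have hNR : (3:ℝ) ≤ (N:ℝ) := by exact_mod_cast hN3
  have hNpos : (0:ℝ) < (N:ℝ) := by linarith
  have hxpos : (0:ℝ) < 2 * N / ε := by positivity
  set L : ℝ := Real.log (2 * N / ε) with hLdef
  have hL1 : 1 < L := by
    rw [hLdef]
    rw [show (1:ℝ) = Real.log (Real.exp 1) by rw [Real.log_exp]]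
    apply Real.log_lt_log (Real.exp_pos 1)
    have he : Real.exp 1 < 2.7182818286 := Real.exp_one_lt_d9
    have : (6:ℝ) ≤ 2 * N := by linarith
    have hε1' : 2 * N ≤ 2 * N / ε := by
      rw [le_div_iff₀ hε0]
      nlinarith
    linarith
  have hL0 : (0:ℝ) < L := by linarith
  set α : ℝ := β / L with hαdef
  have hα0 : 0 < α := div_pos hβ hL0
  have hβα : β = α * L := by rw [hαdef]; field_simp
  -- μ ≥ 0
  have hμ0 : 0 ≤ μ := by
    have h01 : (⟨0, by omega⟩ : Fin N) ≠ (⟨1, by omega⟩ : Fin N) := by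
      intro h; simpa using congrArg Fin.val h
    exact le_trans (abs_nonneg _) (hμ _ _ h01)
  set P := Finset.powersetCard k (univ : Finset (Fin N)) with hPdef
  have hPcard : P.card = N.choose k := by
    rw [hPdef, card_powersetCard, card_univ, Fintype.card_fin]
  by_cases hcase : (k:ℝ) * μ^2 ≤ α
  · -- deterministic case
    have hall : ∀ I ∈ P, ∀ i ∉ I, sincSq Φ I i ≤ α := by
      intro I hI i hi
      rw [hPdef, mem_powersetCard] at hI
      have : sincSq Φ I i ≤ I.card • μ^2 := by
        apply Finset.sum_le_card_nsmul
        intro j hj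
        have hji : j ≠ i := by rintro rfl; exact hi hj
        have := hμ j i hji
        calc (∑ r, Φ r j * Φ r i)^2 = |ip Φ j i|^2 := by rw [sq_abs]; rfl
          _ ≤ μ^2 := by apply pow_le_pow_left₀ (abs_nonneg _) this
      rw [hI.2] at this
      simp only [nsmul_eq_mul] at this
      linarith [hcase, this]
    rw [Finset.filter_true_of_mem hall]
    have : (0:ℝ) ≤ (P.card : ℝ) := Nat.cast_nonneg _
    nlinarith
  · -- probabilistic case
    push_neg at hcase
    have hk1 : 1 ≤ k := by
      by_contra h
      push_neg at h
      interval_cases k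
      simp at hcase
      linarith
    have hkR : (1:ℝ) ≤ (k:ℝ) := by exact_mod_cast hk1
    have hM2 : 0 < μ^2 := by nlinarith
    -- h1' : μ^4 * (32 k L) ≤ (1-a)^2 α^2
    have h1' : μ^4 * (32 * k * L) ≤ (1-a)^2 * α^2 := by
      have hden : (0:ℝ) < 32 * k * L^3 := by positivity
      rw [le_div_iff₀ hden] at h1
      have hβ2 : β^2 = α^2 * L^2 := by rw [hβα]; ring
      rw [hβ2] at h1
      have h1'' : (μ^4*(32*(k:ℝ)*L))*L^2 ≤ ((1-a)^2*α^2)*L^2 := by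
        calc (μ^4*(32*(k:ℝ)*L))*L^2 = μ^4*(32*(k:ℝ)*L^3) := by ring
          _ ≤ (1-a)^2*(α^2*L^2) := h1
          _ = ((1-a)^2*α^2)*L^2 := by ring
      exact le_of_mul_le_mul_right h1'' (by positivity)
    -- key : 32 L μ² ≤ (1-a)² α
    have hkey : 32 * L * μ^2 ≤ (1-a)^2 * α := by
      have hpos : (0:ℝ) ≤ 32 * L * μ^2 := by positivity
      have e1 : (32 * L * μ^2) * α ≤ ((1-a)^2*α) * α := by
        calc (32 * L * μ^2) * α ≤ (32 * L * μ^2) * ((k:ℝ)*μ^2) :=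
              mul_le_mul_of_nonneg_left (le_of_lt hcase) hpos
          _ = μ^4 * (32*(k:ℝ)*L) := by ring
          _ ≤ (1-a)^2 * α^2 := h1'
          _ = ((1-a)^2*α) * α := by ring
      exact le_of_mul_le_mul_right e1 hα0
    set lam : ℝ := (1-a)/2 with hlam
    have hlam0 : 0 < lam := by rw [hlam]; linarith
    have hlam1 : lam ≤ 1 := by rw [hlam]; linarith
    set s : ℝ := lam / μ^2 with hs
    have hs0 : 0 ≤ s := le_of_lt (div_pos hlam0 hM2)
    have hsM : s * μ^2 = lam := div_mul_cancel₀ lam (ne_of_gt hM2)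
    -- exp lam ≤ 1 + lam + lam²
    have hexp2 : Real.exp lam ≤ 1 + lam + lam^2 := by
      have hb := Real.exp_bound' (le_of_lt hlam0) hlam1 (n := 2) (by norm_num)
      simp only [Finset.sum_range_succ, Finset.sum_range_zero, Nat.factorial] at hb
      norm_num at hb
      linarith [sq_nonneg lam]
    set D : ℝ := Real.exp lam - 1 with hD
    have hD0 : 0 ≤ D := by
      rw [hD]; have := Real.one_le_exp (le_of_lt hlam0); linarith
    -- kθ ≤ aα
    have hkθ : (k:ℝ) * θ ≤ a * α := by
      have hkL : (0:ℝ) < (k:ℝ) * L := by positivity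
      have h2' : θ * ((k:ℝ) * L) ≤ a * β := by
        rw [div_eq_mul_inv] at h2
        calc θ * ((k:ℝ)*L) ≤ (a * β * ((k:ℝ)*L)⁻¹) * ((k:ℝ)*L) := by
              apply mul_le_mul_of_nonneg_right h2 (le_of_lt hkL)
          _ = a * β := by field_simp
      rw [hβα] at h2'
      have h3' : ((k:ℝ)*θ)*L ≤ (a*α)*L := by linarith [h2']
      exact le_of_mul_le_mul_right h3' hL0
    -- final exponent bound
    have hDlam : D ≤ lam + lam^2 := by rw [hD]; linarith [hexp2]
    have hfinal : -(s*α) + a * α * D / μ^2 ≤ -L := by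
      have hmain : L * μ^2 ≤ lam * α - a * α * D := by
        have c1 : a * α * D ≤ a * α * (lam + lam^2) :=
          mul_le_mul_of_nonneg_left hDlam (by positivity)
        have c2 : lam * α - a * α * (lam + lam^2) ≥ α * ((1-a)^2/4) := by
          have : lam * α - a * α * (lam + lam^2) - α * ((1-a)^2/4)
              = α * (lam * (1-a) - a*lam^2 - (1-a)^2/4) := by ring
          have hin : lam * (1-a) - a*lam^2 - (1-a)^2/4 ≥ 0 := by
            rw [hlam]
            have ha1' : a * ((1-a)/2)^2 ≤ ((1-a)/2)^2 := by nlinarith [sq_nonneg ((1-a)/2)]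
            nlinarith [sq_nonneg (1-a)]
          nlinarith [mul_nonneg (le_of_lt hα0) hin]
        have c3 : α * ((1-a)^2/4) ≥ (32 * L * μ^2)/4 := by nlinarith [hkey]
        have c4 : (32 * L * μ^2)/4 ≥ L * μ^2 := by nlinarith [mul_pos hL0 hM2]
        linarith
      have he : -(s*α) = -(lam * α)/μ^2 := by rw [hs]; field_simp
      rw [he, ← add_div, div_le_iff₀ hM2]
      linarith [hmain]
    -- row sum bound from θ
    have hN1 : (0:ℝ) < (N:ℝ) - 1 := by linarith
    have ipcomm : ∀ i j : Fin N, ip Φ i j = ip Φ j i := by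
      intro i j
      exact Finset.sum_congr rfl (fun r _ => mul_comm _ _)
    have hrowbound : ∀ i : Fin N,
        ∑ j ∈ (univ : Finset (Fin N)).erase i, (∑ r, Φ r j * Φ r i)^2 ≤ ((N:ℝ)-1) * θ := by
      intro i
      have hid : ∑ j ∈ (univ : Finset (Fin N)).erase i, (∑ r, Φ r j * Φ r i)^2
          = ∑ j ∈ (univ : Finset (Fin N)).erase i, (ip Φ i j)^2 := by
        apply Finset.sum_congr rfl
        intro j _
        rw [ipcomm i j]
        rfl
      rw [hid]
      rcases hθ with ⟨hCI, hbar⟩ | hmax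
      · -- coherence invariant case
        have hrow : ∀ i' : Fin N,
            ∑ j ∈ (univ : Finset (Fin N)).erase i', (ip Φ i' j)^2
              = ∑ j ∈ (univ : Finset (Fin N)).erase i, (ip Φ i j)^2 := by
          intro i'
          have e : ∀ i'' : Fin N, ∑ j ∈ (univ : Finset (Fin N)).erase i'', (ip Φ i'' j)^2
              = (Multiset.map (fun x => x^2)
                  (Multiset.map (fun j => |ip Φ i'' j|) ((univ : Finset (Fin N)).erase i'').val)).sum := by
            intro i''
            rw [Multiset.map_map]
            rw [Finset.sum_eq_multiset_sum]
            congr 1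
            apply Multiset.map_congr rfl
            intro j _
            simp [Function.comp, sq_abs]
          rw [e i', e i, hCI i' i]
        have hNne : (N:ℝ) ≠ 0 := ne_of_gt hNpos
        have hval : θ * (((N:ℝ)) * ((N:ℝ)-1))
            = ((N:ℝ)) * ∑ j ∈ (univ : Finset (Fin N)).erase i, (ip Φ i j)^2 := by
          rw [hbar]
          unfold mu2bar
          rw [div_mul_cancel₀]
          · rw [Finset.sum_congr rfl (fun i' _ => hrow i'), Finset.sum_const,
              card_univ, Fintype.card_fin, nsmul_eq_mul]
          · exact mul_ne_zero hNne (ne_of_gt hN1)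
        have hcc : ((N:ℝ)-1) * θ = ∑ j ∈ (univ : Finset (Fin N)).erase i, (ip Φ i j)^2 := by
          apply mul_left_cancel₀ hNne
          rw [← hval]
          ring
        linarith [hcc.ge]
      · -- mu2max case
        set f : Fin N → ℝ := fun j =>
          (∑ i' ∈ (univ : Finset (Fin N)).erase j, (ip Φ i' j)^2)/((N:ℝ)-1) with hf
        have hbdd : BddAbove {t : ℝ | ∃ j : Fin N,
            t = (∑ i' ∈ (univ : Finset (Fin N)).erase j, (ip Φ i' j)^2)/((N:ℝ)-1)} := by
          have : {t : ℝ | ∃ j : Fin N,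
              t = (∑ i' ∈ (univ : Finset (Fin N)).erase j, (ip Φ i' j)^2)/((N:ℝ)-1)}
              = Set.range f := by
            ext x
            simp [hf, eq_comm]
          rw [this]
          exact Set.Finite.bddAbove (Set.finite_range f)
        have hmem : f i ∈ {t : ℝ | ∃ j : Fin N,
            t = (∑ i' ∈ (univ : Finset (Fin N)).erase j, (ip Φ i' j)^2)/((N:ℝ)-1)} := ⟨i, rfl⟩
        have hle : f i ≤ θ := by
          rw [hmax]
          exact le_csSup hbdd hmem
        have : ∑ i' ∈ (univ : Finset (Fin N)).erase i, (ip Φ i' i)^2 ≤ ((N:ℝ)-1) * θ := by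
          rw [hf] at hle
          simp only at hle
          rw [div_le_iff₀ hN1] at hle
          linarith [hle]
        calc ∑ j ∈ (univ : Finset (Fin N)).erase i, (ip Φ i j)^2
            = ∑ i' ∈ (univ : Finset (Fin N)).erase i, (ip Φ i' i)^2 :=
              Finset.sum_congr rfl (fun j _ => by rw [ipcomm i j])
          _ ≤ ((N:ℝ)-1) * θ := this
    -- per-index bad count
    have peri : ∀ i : Fin N,
        ((P.filter (fun I => i ∉ I ∧ α < sincSq Φ I i)).card : ℝ)
          ≤ (N.choose k : ℝ) * (ε/(2*N)) := by
      intro i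
      set F := (univ : Finset (Fin N)).erase i with hF
      have hFcard : F.card = N - 1 := by
        rw [hF, card_erase_of_mem (mem_univ i), card_univ, Fintype.card_fin]
      have hFcardR : (F.card : ℝ) = (N:ℝ) - 1 := by
        rw [hFcard, Nat.cast_sub (by omega : 1 ≤ N), Nat.cast_one]
      set c : Fin N → ℝ := fun j => (∑ r, Φ r j * Φ r i)^2 with hc
      have hc0 : ∀ j ∈ F, 0 ≤ c j := fun j _ => sq_nonneg _
      have hcM : ∀ j ∈ F, c j ≤ μ^2 := by
        intro j hj
        have hji : j ≠ i := (Finset.mem_erase.mp hj).1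
        have := hμ j i hji
        calc c j = |ip Φ j i|^2 := by rw [sq_abs]; rfl
          _ ≤ μ^2 := pow_le_pow_left₀ (abs_nonneg _) this 2
      have hsub : (P.filter (fun I => i ∉ I ∧ α < sincSq Φ I i)) ⊆
          (powersetCard k F).filter (fun I => α < ∑ j ∈ I, c j) := by
        intro I hI
        rw [mem_filter, hPdef, mem_powersetCard] at hI
        obtain ⟨⟨hIu, hIc⟩, hiI, hlt⟩ := hI
        rw [mem_filter, mem_powersetCard]
        refine ⟨⟨?_, hIc⟩, hlt⟩
        rw [hF]
        exact Finset.subset_erase.mpr ⟨hIu, hiI⟩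
      have hch := sincAux_chernoff_count F k c hc0 α s hs0
      have hzsum : ∑ j ∈ F, (Real.exp (s * c j) - 1) ≤ (((N:ℝ)-1) * θ) * (D/μ^2) := by
        calc ∑ j ∈ F, (Real.exp (s * c j) - 1) ≤ ∑ j ∈ F, c j * (D/μ^2) := by
              apply Finset.sum_le_sum
              intro j hj
              have hb := sincAux_exp_convex_bound (c j) (μ^2) s (hc0 j hj) (hcM j hj) hM2
              rw [hsM] at hb
              rw [hD]
              calc Real.exp (s * c j) - 1 ≤ (c j / μ^2) * (Real.exp lam - 1) := by linarith [hb]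
                _ = c j * ((Real.exp lam - 1)/μ^2) := by ring
          _ = (∑ j ∈ F, c j) * (D/μ^2) := by rw [← Finset.sum_mul]
          _ ≤ (((N:ℝ)-1) * θ) * (D/μ^2) := by
              apply mul_le_mul_of_nonneg_right _ (by positivity)
              exact hrowbound i
      have hW : ((k:ℝ)/(F.card:ℝ)) * ∑ j ∈ F, (Real.exp (s * c j) - 1) ≤ a*α*D/μ^2 := by
        rw [hFcardR]
        have hk0 : (0:ℝ) ≤ (k:ℝ)/((N:ℝ)-1) := by positivity
        calc ((k:ℝ)/((N:ℝ)-1)) * ∑ j ∈ F, (Real.exp (s * c j) - 1)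
            ≤ ((k:ℝ)/((N:ℝ)-1)) * ((((N:ℝ)-1) * θ) * (D/μ^2)) :=
              mul_le_mul_of_nonneg_left hzsum hk0
          _ = ((k:ℝ)*θ) * (D/μ^2) := by
              field_simp
          _ ≤ (a*α) * (D/μ^2) := mul_le_mul_of_nonneg_right hkθ (by positivity)
          _ = a*α*D/μ^2 := by ring
      have hCle : ((F.card.choose k : ℕ) : ℝ) ≤ (N.choose k : ℝ) := by
        have : F.card.choose k ≤ N.choose k := Nat.choose_le_choose k (by omega)
        exact_mod_cast this
      have hexpL : Real.exp (-L) = ε/(2*N) := by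
        rw [hLdef, Real.exp_neg, Real.exp_log hxpos, inv_div]
      calc ((P.filter (fun I => i ∉ I ∧ α < sincSq Φ I i)).card : ℝ)
          ≤ (((powersetCard k F).filter (fun I => α < ∑ j ∈ I, c j)).card : ℝ) := by
            exact_mod_cast Finset.card_le_card hsub
        _ ≤ Real.exp (-(s*α)) * ((F.card.choose k : ℝ) *
              Real.exp (((k : ℝ) / F.card) * ∑ j ∈ F, (Real.exp (s * c j) - 1))) := hch
        _ ≤ Real.exp (-(s*α)) * ((F.card.choose k : ℝ) * Real.exp (a*α*D/μ^2)) := by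
            apply mul_le_mul_of_nonneg_left _ (Real.exp_nonneg _)
            apply mul_le_mul_of_nonneg_left _ (Nat.cast_nonneg _)
            exact Real.exp_le_exp.mpr hW
        _ = (F.card.choose k : ℝ) * Real.exp (-(s*α) + a*α*D/μ^2) := by
            rw [Real.exp_add]
            ring
        _ ≤ (F.card.choose k : ℝ) * Real.exp (-L) := by
            apply mul_le_mul_of_nonneg_left _ (Nat.cast_nonneg _)
            exact Real.exp_le_exp.mpr hfinal
        _ ≤ (N.choose k : ℝ) * Real.exp (-L) :=
            mul_le_mul_of_nonneg_right hCle (Real.exp_nonneg _)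
        _ = (N.choose k : ℝ) * (ε/(2*N)) := by rw [hexpL]
    -- assemble
    have hsplit := Finset.card_filter_add_card_filter_not
      (s := P) (p := fun I => ∀ i ∉ I, sincSq Φ I i ≤ α)
    have hbadsub : P.filter (fun I => ¬ ∀ i ∉ I, sincSq Φ I i ≤ α) ⊆
        univ.biUnion (fun i : Fin N => P.filter (fun I => i ∉ I ∧ α < sincSq Φ I i)) := by
      intro I hI
      rw [mem_filter] at hI
      obtain ⟨hIP, hn⟩ := hI
      have hn' : ∃ i, i ∉ I ∧ α < sincSq Φ I i := by
        by_contra hcon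
        push_neg at hcon
        exact hn fun i hi => hcon i hi
      obtain ⟨i, hiI, hlt⟩ := hn'
      exact mem_biUnion.mpr ⟨i, mem_univ i, mem_filter.mpr ⟨hIP, hiI, hlt⟩⟩
    have hbadcard : ((P.filter (fun I => ¬ ∀ i ∉ I, sincSq Φ I i ≤ α)).card : ℝ)
        ≤ (N.choose k : ℝ) * (ε/2) := by
      have h1c : (P.filter (fun I => ¬ ∀ i ∉ I, sincSq Φ I i ≤ α)).card ≤
          ∑ i : Fin N, (P.filter (fun I => i ∉ I ∧ α < sincSq Φ I i)).card :=
        le_trans (Finset.card_le_card hbadsub) (Finset.card_biUnion_le)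
      have h2c : ((P.filter (fun I => ¬ ∀ i ∉ I, sincSq Φ I i ≤ α)).card : ℝ) ≤
          ∑ i : Fin N, ((P.filter (fun I => i ∉ I ∧ α < sincSq Φ I i)).card : ℝ) := by
        exact_mod_cast h1c
      calc ((P.filter (fun I => ¬ ∀ i ∉ I, sincSq Φ I i ≤ α)).card : ℝ)
          ≤ ∑ i : Fin N, ((P.filter (fun I => i ∉ I ∧ α < sincSq Φ I i)).card : ℝ) := h2c
        _ ≤ ∑ _i : Fin N, (N.choose k : ℝ) * (ε/(2*N)) := Finset.sum_le_sum (fun i _ => peri i)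
        _ = (N:ℝ) * ((N.choose k : ℝ) * (ε/(2*N))) := by
            rw [Finset.sum_const, card_univ, Fintype.card_fin, nsmul_eq_mul]
        _ = (N.choose k : ℝ) * (ε/2) := by
            field_simp
    have hcs : ((P.filter (fun I => ∀ i ∉ I, sincSq Φ I i ≤ α)).card : ℝ) +
        ((P.filter (fun I => ¬ ∀ i ∉ I, sincSq Φ I i ≤ α)).card : ℝ) = (P.card : ℝ) := by
      exact_mod_cast hsplit
    have hC0 : (0:ℝ) ≤ (N.choose k : ℝ) := Nat.cast_nonneg _
    have hPC : (P.card : ℝ) = (N.choose k : ℝ) := by exact_mod_cast hPcard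
    have hεC : 0 ≤ ε * (N.choose k : ℝ) := mul_nonneg (le_of_lt hε0) hC0
    have key : (1 - ε) * (P.card : ℝ) ≤
        ((P.filter (fun I => ∀ i ∉ I, sincSq Φ I i ≤ α)).card : ℝ) := by
      have hεx : ε * (P.card : ℝ) = ε * (N.choose k : ℝ) := by rw [hPC]
      linarith [hbadcard, hcs, hεC, hPC, hεx]
    exact key
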